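/- Up to isomorphism, there are exactly two nilpotent Lie algebras of dimension 4 over an algebraically closed field of characteristic zero that are at most 2-step nilpotent: the abelian algebra a₄ and h₁ ⊕ a₁, the 3-dimensional Heisenberg algebra plus a 1-dimensional abelian factor. -/

import Mathlib

/-- Up to isomorphism there are exactly two at most 2-step nilpotent Lie algebras of
dimension 4 over an algebraically closed field of characteristic zero: the abelian
one a₄, and h₁ ⊕ a₁ (which admits a basis with [b₀,b₁] = b₂ and all other brackets
of basis elements zero); moreover these two cases are mutually exclusive. -/
theorem dim_four_two_step_nilpotent_classification (K L : Type*) [Field K]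
    [IsAlgClosed K] [CharZero K] [LieRing L] [LieAlgebra K L]
    (h4 : Module.finrank K L = 4)
    (h2 : ∀ x y z : L, ⁅⁅x, y⁆, z⁆ = 0) :
    ((∀ x y : L, ⁅x, y⁆ = 0) ∨
      (∃ b : Module.Basis (Fin 4) K L, ⁅b 0, b 1⁆ = b 2 ∧ ⁅b 0, b 2⁆ = 0 ∧ ⁅b 0, b 3⁆ = 0 ∧
        ⁅b 1, b 2⁆ = 0 ∧ ⁅b 1, b 3⁆ = 0 ∧ ⁅b 2, b 3⁆ = 0)) ∧
    ¬((∀ x y : L, ⁅x, y⁆ = 0) ∧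
      (∃ b : Module.Basis (Fin 4) K L, ⁅b 0, b 1⁆ = b 2 ∧ ⁅b 0, b 2⁆ = 0 ∧ ⁅b 0, b 3⁆ = 0 ∧
        ⁅b 1, b 2⁆ = 0 ∧ ⁅b 1, b 3⁆ = 0 ∧ ⁅b 2, b 3⁆ = 0)) := by
  constructor
  · by_cases hab : ∀ x y : L, ⁅x, y⁆ = 0
    · exact Or.inl hab
    · right
      push_neg at hab
      obtain ⟨x, y, hxy⟩ := hab
      obtain ⟨z, hzdef⟩ : ∃ z : L, ⁅x, y⁆ = z := ⟨_, rfl⟩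
      rw [hzdef] at hxy
      -- brackets are central
      have hc : ∀ a b c : L, ⁅a, ⁅b, c⁆⁆ = 0 := fun a b c => by
        rw [← lie_skew, h2, neg_zero]
      have hxz : ⁅x, z⁆ = 0 := by rw [← hzdef]; exact hc x x y
      have hyz : ⁅y, z⁆ = 0 := by rw [← hzdef]; exact hc y x y
      have hzc : ∀ t : L, ⁅z, t⁆ = 0 := fun t => by rw [← hzdef]; exact h2 x y t
      have hyx : ⁅y, x⁆ = -z := by rw [← lie_skew, hzdef]
      -- key independence lemma
      have indep4 : ∀ u : L, ⁅x, u⁆ = 0 → ⁅y, u⁆ = 0 → u ∉ Submodule.span K {z} →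
          LinearIndependent K ![x, y, z, u] := by
        intro u hxu hyu hu
        rw [Fintype.linearIndependent_iff]
        intro g hg
        rw [Fin.sum_univ_four] at hg
        simp only [Matrix.cons_val_zero, Matrix.cons_val_one, Matrix.head_cons,
          Matrix.cons_val_two, Matrix.tail_cons, Matrix.cons_val_three] at hg
        have h1 : g 1 = 0 := by
          have := congrArg (fun t => ⁅x, t⁆) hg
          simp only [lie_add, lie_smul, lie_self, smul_zero, hzdef, hxz, hxu, add_zero,
            zero_add, lie_zero] at this
          rcases smul_eq_zero.mp this with h | h
          · exact h
          · exact absurd h hxy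
        have h0 : g 0 = 0 := by
          have := congrArg (fun t => ⁅y, t⁆) hg
          simp only [lie_add, lie_smul, lie_self, smul_zero, hyz, hyu, hyx, add_zero,
            zero_add, lie_zero, smul_neg, neg_eq_zero] at this
          rcases smul_eq_zero.mp this with h | h
          · exact h
          · exact absurd h hxy
        rw [h0, h1, zero_smul, zero_smul, zero_add, zero_add] at hg
        have h3 : g 3 = 0 := by
          by_contra h3
          apply hu
          rw [Submodule.mem_span_singleton]
          refine ⟨-((g 3)⁻¹ * g 2), ?_⟩
          have h5 : g 3 • u = -(g 2 • z) := by
            rw [eq_neg_iff_add_eq_zero, add_comm]; exact hg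
          have h6 : (-((g 3)⁻¹ * g 2)) • z = (g 3)⁻¹ • (-(g 2 • z)) := by
            rw [neg_smul, smul_neg, smul_smul]
          rw [h6, ← h5, smul_smul, inv_mul_cancel₀ h3, one_smul]
        rw [h3, zero_smul, add_zero] at hg
        have hg2 : g 2 = 0 := by
          rcases smul_eq_zero.mp hg with h | h
          · exact h
          · exact absurd h hxy
        intro i; fin_cases i <;> assumption
      -- every bracket ⁅x, w⁆ is a multiple of z
      have keyx : ∀ w : L, ∃ a : K, ⁅x, w⁆ = a • z := by
        intro w
        by_contra h
        push_neg at h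
        have hus : ⁅x, w⁆ ∉ Submodule.span K {z} := by
          rw [Submodule.mem_span_singleton]
          rintro ⟨a, ha⟩
          exact h a ha.symm
        have hli := indep4 ⁅x, w⁆ (hc x x w) (hc y x w) hus
        have hcard : Fintype.card (Fin 4) = Module.finrank K L := by simp [h4]
        let b := basisOfLinearIndependentOfCardEqFinrank hli hcard
        have hb : ∀ i, b i = ![x, y, z, ⁅x, w⁆] i := fun i => by
          rw [coe_basisOfLinearIndependentOfCardEqFinrank]
        have hw := b.sum_repr w
        rw [Fin.sum_univ_four, hb 0, hb 1, hb 2, hb 3] at hw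
        simp only [Matrix.cons_val_zero, Matrix.cons_val_one, Matrix.head_cons,
          Matrix.cons_val_two, Matrix.tail_cons, Matrix.cons_val_three] at hw
        have := congrArg (fun t => ⁅x, t⁆) hw.symm
        simp only [lie_add, lie_smul, lie_self, smul_zero, hzdef, hxz, hc x x w, add_zero,
          zero_add, lie_zero] at this
        exact h (b.repr w 1) this
      have keyy : ∀ w : L, ∃ a : K, ⁅y, w⁆ = a • z := by
        intro w
        by_contra h
        push_neg at h
        have hus : ⁅y, w⁆ ∉ Submodule.span K {z} := by
          rw [Submodule.mem_span_singleton]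
          rintro ⟨a, ha⟩
          exact h a ha.symm
        have hli := indep4 ⁅y, w⁆ (hc x y w) (hc y y w) hus
        have hcard : Fintype.card (Fin 4) = Module.finrank K L := by simp [h4]
        let b := basisOfLinearIndependentOfCardEqFinrank hli hcard
        have hb : ∀ i, b i = ![x, y, z, ⁅y, w⁆] i := fun i => by
          rw [coe_basisOfLinearIndependentOfCardEqFinrank]
        have hw := b.sum_repr w
        rw [Fin.sum_univ_four, hb 0, hb 1, hb 2, hb 3] at hw
        simp only [Matrix.cons_val_zero, Matrix.cons_val_one, Matrix.head_cons,
          Matrix.cons_val_two, Matrix.tail_cons, Matrix.cons_val_three] at hw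
        have := congrArg (fun t => ⁅y, t⁆) hw.symm
        simp only [lie_add, lie_smul, lie_self, smul_zero, hyz, hyx, hc y y w, add_zero,
          zero_add, lie_zero] at this
        refine h (-(b.repr w 0)) ?_
        rw [neg_smul, ← smul_neg]
        exact this
      -- find w outside the span of x, y, z
      obtain ⟨w, hw⟩ : ∃ w : L, w ∉ Submodule.span K (Set.range ![x, y, z]) := by
        by_contra h
        push_neg at h
        have htop : Submodule.span K (Set.range ![x, y, z]) = ⊤ :=
          eq_top_iff.mpr fun w _ => h w
        have h3 := finrank_range_le_card (R := K) ![x, y, z]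
        rw [Set.finrank, htop, finrank_top, h4] at h3
        simp at h3
      obtain ⟨a, ha⟩ := keyx w
      obtain ⟨c, hcw⟩ := keyy w
      -- corrected fourth basis vector
      have hxw' : ⁅x, w - a • y + c • x⁆ = 0 := by
        simp only [lie_add, lie_sub, lie_smul, lie_self, smul_zero, add_zero, ha, hzdef]
        abel
      have hyw' : ⁅y, w - a • y + c • x⁆ = 0 := by
        simp only [lie_add, lie_sub, lie_smul, lie_self, smul_zero, sub_zero, hcw, hyx,
          smul_neg]
        abel
      have hzw' : ⁅z, w - a • y + c • x⁆ = 0 := hzc _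
      have hw's : w - a • y + c • x ∉ Submodule.span K {z} := by
        intro hmem
        apply hw
        have hx : x ∈ Submodule.span K (Set.range ![x, y, z]) :=
          Submodule.subset_span ⟨0, rfl⟩
        have hy : y ∈ Submodule.span K (Set.range ![x, y, z]) :=
          Submodule.subset_span ⟨1, rfl⟩
        have hzr : ({z} : Set L) ⊆ Set.range ![x, y, z] :=
          Set.singleton_subset_iff.mpr ⟨2, rfl⟩
        have hw'mem : w - a • y + c • x ∈ Submodule.span K (Set.range ![x, y, z]) :=
          Submodule.span_mono hzr hmem
        have hweq : w = (w - a • y + c • x) + a • y - c • x := by abel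
        rw [hweq]
        exact Submodule.sub_mem _ (Submodule.add_mem _ hw'mem (Submodule.smul_mem _ _ hy))
          (Submodule.smul_mem _ _ hx)
      have hli := indep4 _ hxw' hyw' hw's
      have hcard : Fintype.card (Fin 4) = Module.finrank K L := by simp [h4]
      refine ⟨basisOfLinearIndependentOfCardEqFinrank hli hcard, ?_⟩
      have hb : ∀ i, basisOfLinearIndependentOfCardEqFinrank hli hcard i
          = ![x, y, z, w - a • y + c • x] i :=
        fun i => by rw [coe_basisOfLinearIndependentOfCardEqFinrank]
      rw [hb 0, hb 1, hb 2, hb 3]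
      simp only [Matrix.cons_val_zero, Matrix.cons_val_one, Matrix.head_cons,
        Matrix.cons_val_two, Matrix.tail_cons, Matrix.cons_val_three]
      exact ⟨hzdef, hxz, hxw', hyz, hyw', hzw'⟩
  · rintro ⟨habel, b, hb01, -⟩
    have : b 2 = 0 := by rw [← hb01, habel]
    exact b.ne_zero 2 this
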